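/- Let m_r, m_s, q_r, q_s be natural numbers with m_s < m_r, 1 < q_s < m_s, and 1 < q_r < m_r, and let C denote the binomial coefficient. Suppose q_s · m_r > q_r · m_s and (m_r − q_r) · (q_s + 1) > (m_s − q_s) · (q_r + 1). Then for every k with q_r + q_s ≤ k ≤ min(q_r + m_s, q_s + m_r), C(m_s − 1, q_s − 1) · C(m_r, k − q_s) > C(m_r − 1, q_r − 1) · C(m_s, k − q_r). -/

import Mathlib

/-- Proposition 8 (d) of the paper: for `m_s < m_r`, `1 < q_s < m_s`, `1 < q_r < m_r`, if
`q_s·m_r > q_r·m_s` and `(m_r−q_r)·(q_s+1) > (m_s−q_s)·(q_r+1)`, then for every `k` with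
`q_r + q_s ≤ k ≤ min(q_r + m_s, q_s + m_r)`,
`C(m_s−1, q_s−1)·C(m_r, k−q_s) > C(m_r−1, q_r−1)·C(m_s, k−q_r)`. -/
theorem choose_prod_ineq_all_sizes (ms mr qs qr : ℕ)
    (hsize : ms < mr) (hqs1 : 1 < qs) (hqs2 : qs < ms) (hqr1 : 1 < qr) (hqr2 : qr < mr)
    (h1 : qs * mr > qr * ms)
    (h2 : (mr - qr) * (qs + 1) > (ms - qs) * (qr + 1)) :
    ∀ k : ℕ, qr + qs ≤ k → k ≤ min (qr + ms) (qs + mr) →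
      (ms - 1).choose (qs - 1) * mr.choose (k - qs) >
        (mr - 1).choose (qr - 1) * ms.choose (k - qr) := by
  intro k hk1
  induction k, hk1 using Nat.le_induction with
  | base =>
    intro _
    have e1 : mr * (mr - 1).choose (qr - 1) = mr.choose qr * qr := by
      have h := Nat.add_one_mul_choose_eq (mr - 1) (qr - 1)
      rw [show (mr - 1) + 1 = mr from by omega, show (qr - 1) + 1 = qr from by omega] at h
      exact h
    have e2 : ms * (ms - 1).choose (qs - 1) = ms.choose qs * qs := by
      have h := Nat.add_one_mul_choose_eq (ms - 1) (qs - 1)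
      rw [show (ms - 1) + 1 = ms from by omega, show (qs - 1) + 1 = qs from by omega] at h
      exact h
    have hP : 0 < (ms - 1).choose (qs - 1) * (mr - 1).choose (qr - 1) :=
      Nat.mul_pos (Nat.choose_pos (by omega)) (Nat.choose_pos (by omega))
    rw [Nat.add_sub_cancel, Nat.add_sub_cancel_left]
    refine Nat.lt_of_mul_lt_mul_right
      (?_ : (mr - 1).choose (qr - 1) * ms.choose qs * (qs * qr) <
        (ms - 1).choose (qs - 1) * mr.choose qr * (qs * qr))
    have eq1 : (mr - 1).choose (qr - 1) * ms.choose qs * (qs * qr)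
        = ((ms - 1).choose (qs - 1) * (mr - 1).choose (qr - 1)) * (qr * ms) := by
      rw [show (mr - 1).choose (qr - 1) * ms.choose qs * (qs * qr)
          = (ms.choose qs * qs) * ((mr - 1).choose (qr - 1) * qr) from by ring, ← e2]
      ring
    have eq2 : (ms - 1).choose (qs - 1) * mr.choose qr * (qs * qr)
        = ((ms - 1).choose (qs - 1) * (mr - 1).choose (qr - 1)) * (qs * mr) := by
      rw [show (ms - 1).choose (qs - 1) * mr.choose qr * (qs * qr)
          = (mr.choose qr * qr) * ((ms - 1).choose (qs - 1) * qs) from by ring, ← e1]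
      ring
    rw [eq1, eq2]
    exact (Nat.mul_lt_mul_left hP).2 h1
  | succ k hk ih =>
    intro hk2
    have ih' := ih (by omega)
    set a := k - qs with ha
    set b := k - qr with hb
    have haa : k + 1 - qs = a + 1 := by omega
    have hbb : k + 1 - qr = b + 1 := by omega
    have halt : a < mr := by omega
    have hblt : b < ms := by omega
    rw [haa, hbb]
    -- key ratio inequality
    have key : (ms - b) * (a + 1) < (mr - a) * (b + 1) := by
      have h2z : ((mr : ℤ) - qr) * (qs + 1) > ((ms : ℤ) - qs) * (qr + 1) := by
        zify [le_of_lt hqr2, le_of_lt hqs2] at h2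
        exact h2
      have ht : (0 : ℤ) ≤ (k : ℤ) - qr - qs := by
        have := hk; omega
      have hd : (0 : ℤ) ≤ (mr : ℤ) - ms := by omega
      zify [le_of_lt halt, le_of_lt hblt]
      have haz : (a : ℤ) = (k : ℤ) - qs := by omega
      have hbz : (b : ℤ) = (k : ℤ) - qr := by omega
      rw [haz, hbz]
      nlinarith [mul_nonneg ht hd]
    have eA : mr.choose (a + 1) * (a + 1) = mr.choose a * (mr - a) :=
      Nat.choose_succ_right_eq mr a
    have eB : ms.choose (b + 1) * (b + 1) = ms.choose b * (ms - b) :=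
      Nat.choose_succ_right_eq ms b
    have hpos : 0 < (mr - a) * (b + 1) := Nat.mul_pos (by omega) (by omega)
    refine Nat.lt_of_mul_lt_mul_right
      (?_ : (mr - 1).choose (qr - 1) * ms.choose (b + 1) * ((a + 1) * (b + 1)) <
        (ms - 1).choose (qs - 1) * mr.choose (a + 1) * ((a + 1) * (b + 1)))
    have eL : (ms - 1).choose (qs - 1) * mr.choose (a + 1) * ((a + 1) * (b + 1))
        = ((ms - 1).choose (qs - 1) * mr.choose a) * ((mr - a) * (b + 1)) := by
      rw [show (ms - 1).choose (qs - 1) * mr.choose (a + 1) * ((a + 1) * (b + 1))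
          = (ms - 1).choose (qs - 1) * (mr.choose (a + 1) * (a + 1)) * (b + 1) from by ring,
        eA]
      ring
    have eR : (mr - 1).choose (qr - 1) * ms.choose (b + 1) * ((a + 1) * (b + 1))
        = ((mr - 1).choose (qr - 1) * ms.choose b) * ((ms - b) * (a + 1)) := by
      rw [show (mr - 1).choose (qr - 1) * ms.choose (b + 1) * ((a + 1) * (b + 1))
          = (mr - 1).choose (qr - 1) * (ms.choose (b + 1) * (b + 1)) * (a + 1) from by ring,
        eB]
      ring
    rw [eL, eR]
    calc (mr - 1).choose (qr - 1) * ms.choose b * ((ms - b) * (a + 1))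
        ≤ (mr - 1).choose (qr - 1) * ms.choose b * ((mr - a) * (b + 1)) :=
          Nat.mul_le_mul_left _ key.le
      _ < (ms - 1).choose (qs - 1) * mr.choose a * ((mr - a) * (b + 1)) :=
          Nat.mul_lt_mul_of_pos_right ih' hpos
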